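/- Let n ≥ 2 and let B = x eₙ* + eₙ y* ∈ Mₙ(ℂ) have nonzero entries at positions (1,n), (n,1) and (n,n). Then the two nonzero singular values of B are distinct, i.e., σ₁(B) > σ₂(B) > 0. -/

import Mathlib

open Matrix

/-- The operator (spectral) norm of a complex matrix, induced by the Euclidean norm on `ℂⁿ`. -/
noncomputable def opNorm {n : ℕ} (A : Matrix (Fin n) (Fin n) ℂ) : ℝ :=
  ‖Matrix.toEuclideanCLM (𝕜 := ℂ) (n := Fin n) A‖

/-- Birkhoff–James orthogonality of matrices with respect to the operator norm. -/
def BJ {n : ℕ} (A B : Matrix (Fin n) (Fin n) ℂ) : Prop :=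
  ∀ c : ℂ, opNorm A ≤ opNorm (A + c • B)

lemma mulvv {n : ℕ} (a b c d : Fin n → ℂ) :
    vecMulVec a b * vecMulVec c d = (b ⬝ᵥ c) • vecMulVec a d := by
  ext i j
  simp [mul_apply, vecMulVec_apply, dotProduct, Finset.sum_mul, Finset.mul_sum]
  exact Finset.sum_congr rfl fun k _ => by ring

lemma vvCT {n : ℕ} (a b : Fin n → ℂ) :
    (vecMulVec a (star b))ᴴ = vecMulVec b (star a) := by
  ext i j
  simp [conjTranspose_apply, vecMulVec_apply, mul_comm]

lemma svd3 {n : ℕ} (σ₁ σ₂ : ℝ) (u₁ u₂ v₁ v₂ : Fin n → ℂ)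
    (hu₁ : dotProduct (star u₁) u₁ = 1)
    (hu₂ : dotProduct (star u₂) u₂ = 1)
    (hu₁₂ : dotProduct (star u₁) u₂ = 0)
    (hv₁ : dotProduct (star v₁) v₁ = 1)
    (hv₂ : dotProduct (star v₂) v₂ = 1)
    (hv₁₂ : dotProduct (star v₁) v₂ = 0) :
    ((σ₁ : ℂ) • Matrix.vecMulVec u₁ (star v₁) + (σ₂ : ℂ) • Matrix.vecMulVec u₂ (star v₂)) *
    ((σ₁ : ℂ) • Matrix.vecMulVec u₁ (star v₁) + (σ₂ : ℂ) • Matrix.vecMulVec u₂ (star v₂))ᴴ *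
    ((σ₁ : ℂ) • Matrix.vecMulVec u₁ (star v₁) + (σ₂ : ℂ) • Matrix.vecMulVec u₂ (star v₂)) =
    ((σ₁:ℂ)^3) • Matrix.vecMulVec u₁ (star v₁) + ((σ₂:ℂ)^3) • Matrix.vecMulVec u₂ (star v₂) := by
  have hu₂₁ : dotProduct (star u₂) u₁ = 0 := by
    have := congrArg star hu₁₂
    rw [star_dotProduct, star_star] at this
    simpa using this
  have hv₂₁ : dotProduct (star v₂) v₁ = 0 := by
    have := congrArg star hv₁₂
    rw [star_dotProduct, star_star] at this
    simpa using this
  simp only [conjTranspose_add, conjTranspose_smul, vvCT, Complex.star_def, Complex.conj_ofReal,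
    add_mul, mul_add, smul_mul_smul_comm, mulvv, smul_smul, hu₁, hu₂, hu₁₂, hu₂₁, hv₁, hv₂, hv₁₂,
    hv₂₁, one_smul, zero_smul, smul_zero, add_zero, zero_add]
  ring_nf

/-- If `B = x eₙ* + eₙ y*` has nonzero `(1,n)`, `(n,1)`, `(n,n)` entries, then in any
singular value decomposition `B = σ₁ u₁v₁* + σ₂ u₂v₂*` with orthonormal pairs and
`σ₁ ≥ σ₂ ≥ 0`, one has `σ₁ > σ₂ > 0`. -/
theorem stmt4 {n : ℕ} (hn : 2 ≤ n) (x y : Fin n → ℂ)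
    (B : Matrix (Fin n) (Fin n) ℂ)
    (hB : B = Matrix.vecMulVec x (star (Pi.single (⟨n - 1, by omega⟩ : Fin n) 1)) +
          Matrix.vecMulVec (Pi.single (⟨n - 1, by omega⟩ : Fin n) 1) (star y))
    (h1n : B ⟨0, by omega⟩ ⟨n - 1, by omega⟩ ≠ 0)
    (hn1 : B ⟨n - 1, by omega⟩ ⟨0, by omega⟩ ≠ 0)
    (hnn : B ⟨n - 1, by omega⟩ ⟨n - 1, by omega⟩ ≠ 0)
    (σ₁ σ₂ : ℝ) (u₁ u₂ v₁ v₂ : Fin n → ℂ)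
    (hu₁ : dotProduct (star u₁) u₁ = 1)
    (hu₂ : dotProduct (star u₂) u₂ = 1)
    (hu₁₂ : dotProduct (star u₁) u₂ = 0)
    (hv₁ : dotProduct (star v₁) v₁ = 1)
    (hv₂ : dotProduct (star v₂) v₂ = 1)
    (hv₁₂ : dotProduct (star v₁) v₂ = 0)
    (hσ : σ₂ ≤ σ₁) (hσ₂ : 0 ≤ σ₂)
    (hSVD : B = (σ₁ : ℂ) • Matrix.vecMulVec u₁ (star v₁) +
          (σ₂ : ℂ) • Matrix.vecMulVec u₂ (star v₂)) :
    0 < σ₂ ∧ σ₂ < σ₁ := by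
  have hm : n - 1 < n := by omega
  have hz : 0 < n := by omega
  set m : Fin n := ⟨n - 1, hm⟩ with hmdef
  set z : Fin n := ⟨0, hz⟩ with hzdef
  have hzm : z ≠ m := by
    simp only [hmdef, hzdef, Ne, Fin.mk.injEq]
    omega
  set e : Fin n → ℂ := Pi.single m 1 with hedef
  have hez : e z = 0 := Pi.single_eq_of_ne hzm 1
  have hem : e m = 1 := Pi.single_eq_same m 1
  have hestar : ∀ j, star (e j) = e j := by
    intro j
    simp only [hedef, Pi.single_apply]
    split <;> simp
  -- entries of B
  have hentry : ∀ i j, B i j = x i * e j + e i * star (y j) := by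
    intro i j
    rw [hB]
    simp only [Matrix.add_apply, vecMulVec_apply, Pi.star_apply]
    rw [hestar j]
  have hBzz : B z z = 0 := by rw [hentry]; rw [hez]; ring
  have hBzm : B z m = x z := by rw [hentry]; rw [hez, hem]; ring
  have hBmz : B m z = star (y z) := by rw [hentry]; rw [hez, hem]; ring
  have h1n' : B z m ≠ 0 := h1n
  have hn1' : B m z ≠ 0 := hn1
  have hnn' : B m m ≠ 0 := hnn
  -- σ₂ ≠ 0
  have hσ₂ne : σ₂ ≠ 0 := by
    intro h0
    rw [h0] at hSVD
    have hminor : B z m * B m z = B z z * B m m := by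
      rw [hSVD]
      simp only [Complex.ofReal_zero, zero_smul, add_zero, Matrix.smul_apply, vecMulVec_apply,
        smul_eq_mul]
      ring
    rw [hBzz, zero_mul] at hminor
    exact mul_ne_zero h1n' hn1' hminor
  -- σ₁ ≠ σ₂
  have hσne : σ₂ ≠ σ₁ := by
    intro heq
    have key : B * Bᴴ * B = ((σ₁ : ℂ)^2) • B := by
      conv_lhs => rw [hSVD]
      rw [svd3 σ₁ σ₂ u₁ u₂ v₁ v₂ hu₁ hu₂ hu₁₂ hv₁ hv₂ hv₁₂, hSVD, ← heq, smul_add,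
        smul_smul, smul_smul]
      ring_nf
    -- compute entry (z, z) two ways
    have hcol : ∀ k, B k z = e k * star (y z) := by
      intro k; rw [hentry]; rw [hez]; ring
    have hzrow : ∀ j, B z j = x z * e j := by
      intro j; rw [hentry]; rw [hez]; ring
    have h2 : (B * Bᴴ * B) z z = x z * star (B m m) * star (y z) := by
      have : (B * Bᴴ * B) z z = ∑ k, (∑ j, B z j * star (B k j)) * B k z := by
        simp [mul_apply, conjTranspose_apply]
      rw [this]
      have hsum : ∀ k, (∑ j, B z j * star (B k j)) = x z * star (B k m) := by
        intro k
        have : ∀ j, B z j * star (B k j) = if j = m then x z * star (B k m) else 0 := by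
          intro j
          rw [hzrow j]
          simp only [hedef, Pi.single_apply]
          split
          · rename_i h; subst h; simp
          · simp
        simp only [this, Finset.sum_ite_eq', Finset.mem_univ, if_true]
      simp only [hsum]
      have : ∀ k, x z * star (B k m) * B k z =
          if k = m then x z * star (B m m) * star (y z) else 0 := by
        intro k
        rw [hcol k]
        simp only [hedef, Pi.single_apply]
        split
        · rename_i h; subst h; ring
        · simp
      simp only [this, Finset.sum_ite_eq', Finset.mem_univ, if_true]
    have h1 : (B * Bᴴ * B) z z = 0 := by
      rw [key]
      simp only [Matrix.smul_apply, smul_eq_mul, hBzz, mul_zero]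
    rw [h2] at h1
    have : star (B m m) ≠ 0 := by simpa using hnn'
    rw [← hBzm] at h1
    rw [← hBmz] at h1
    exact this (by
      rcases mul_eq_zero.mp h1 with h | h
      · rcases mul_eq_zero.mp h with h' | h'
        · exact absurd h' h1n'
        · exact h'
      · exact absurd h hn1')
  exact ⟨lt_of_le_of_ne hσ₂ (Ne.symm hσ₂ne), lt_of_le_of_ne hσ hσne⟩
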